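/- Explicit polyconvex hull of the averaged triple: Let O = diag(0,0), B¹ = diag(1,1), B² = diag(1/2, 2) and 𝔅 = {O, B¹, B²} ⊆ M^{2×2}. Then the polyconvex hull of 𝔅 is 𝔅^pc = 𝔅 ∪ { diag(b₁(t), b₂(t)) : t ∈ (0,1) }, where b₁(t) = (−3t + 2 + √(9t² − 4t + 4))/4 and b₂(t) = (3t + 2 + √(9t² − 4t + 4))/4. -/
import Mathlib


open Matrix Set

noncomputable section

/-- A set `𝔄 ⊆ M^{2×2}` is polyconvex if there is a convex set `𝔠 ⊆ M^{2×2} × ℝ` such that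
`𝔄 = {Λ : (Λ, det Λ) ∈ 𝔠}`. -/
def IsPolyconvexSet (A : Set (Matrix (Fin 2) (Fin 2) ℝ)) : Prop :=
  ∃ C : Set (Matrix (Fin 2) (Fin 2) ℝ × ℝ), Convex ℝ C ∧
    A = {Λ : Matrix (Fin 2) (Fin 2) ℝ | (Λ, Λ.det) ∈ C}

/-- The polyconvex hull of `𝔄 ⊆ M^{2×2}`: the intersection of all polyconvex sets
containing `𝔄`. -/
def polyconvexHull (A : Set (Matrix (Fin 2) (Fin 2) ℝ)) : Set (Matrix (Fin 2) (Fin 2) ℝ) :=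
  ⋂₀ {B : Set (Matrix (Fin 2) (Fin 2) ℝ) | IsPolyconvexSet B ∧ A ⊆ B}

/-- `b₁(t) = (−3t + 2 + √(9t² − 4t + 4))/4`. -/
def b₁ (t : ℝ) : ℝ := (-3 * t + 2 + Real.sqrt (9 * t ^ 2 - 4 * t + 4)) / 4

/-- `b₂(t) = (3t + 2 + √(9t² − 4t + 4))/4`. -/
def b₂ (t : ℝ) : ℝ := (3 * t + 2 + Real.sqrt (9 * t ^ 2 - 4 * t + 4)) / 4

namespace PCH
abbrev M2 := Matrix (Fin 2) (Fin 2) ℝ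
def p0 : M2 × ℝ := (0, 0)
def p1 : M2 × ℝ := (Matrix.diagonal ![(1:ℝ),1], 1)
def p2 : M2 × ℝ := (Matrix.diagonal ![(1:ℝ)/2,2], 1)

def Combo : Set (M2 × ℝ) :=
  {x | ∃ a b c : ℝ, 0 ≤ a ∧ 0 ≤ b ∧ 0 ≤ c ∧ a + b + c = 1 ∧ x = a • p0 + b • p1 + c • p2}

lemma convex_combo : Convex ℝ Combo := by
  rintro x ⟨a, b, c, ha, hb, hc, habc, rfl⟩ y ⟨a', b', c', ha', hb', hc', habc', rfl⟩ u v hu hv huv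
  refine ⟨u*a + v*a', u*b + v*b', u*c + v*c', by positivity, by positivity, by positivity,
    by nlinarith, ?_⟩
  module

lemma det_diag (x y : ℝ) : (Matrix.diagonal ![x, y]).det = x * y := by
  simp [Matrix.det_diagonal, Fin.prod_univ_two]

lemma hull_eq :
    polyconvexHull {(0 : M2), Matrix.diagonal ![(1 : ℝ), 1], Matrix.diagonal ![(1 : ℝ)/2, 2]}
      = {Λ : M2 | (Λ, Λ.det) ∈ Combo} := by
  apply le_antisymm
  · apply sInter_subset_of_mem
    refine ⟨⟨Combo, convex_combo, rfl⟩, ?_⟩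
    rintro Λ (rfl | rfl | rfl)
    · exact ⟨1, 0, 0, by norm_num, by norm_num, by norm_num, by norm_num, by
        simp [p0, p1, p2, Prod.ext_iff]⟩
    · exact ⟨0, 1, 0, by norm_num, by norm_num, by norm_num, by norm_num, by
        simp [p0, p1, p2, Prod.ext_iff, det_diag]⟩
    · exact ⟨0, 0, 1, by norm_num, by norm_num, by norm_num, by norm_num, by
        simp [p0, p1, p2, Prod.ext_iff, det_diag]⟩
  · intro Λ hΛ
    intro B hB
    obtain ⟨⟨C, hC, rfl⟩, hsub⟩ := hB
    obtain ⟨a, b, c, ha, hb, hc, habc, hx⟩ := hΛ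
    have h0 : p0 ∈ C := by
      have := hsub (show (0:M2) ∈ _ by left; rfl)
      simpa [p0, Matrix.det_zero] using this
    have h1 : p1 ∈ C := by
      have := hsub (show Matrix.diagonal ![(1:ℝ),1] ∈ _ by right; left; rfl)
      simpa [p1, det_diag] using this
    have h2 : p2 ∈ C := by
      have := hsub (show Matrix.diagonal ![(1:ℝ)/2,2] ∈ _ by right; right; rfl)
      have e : ((1:ℝ)/2) * 2 = 1 := by norm_num
      simpa [p2, det_diag, e] using this
    have key : a • p0 + b • p1 + c • p2 ∈ C := by
      have := hC.sum_mem (t := (Finset.univ : Finset (Fin 3))) (w := ![a,b,c]) (z := ![p0,p1,p2])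
        (by intro i _; fin_cases i <;> assumption)
        (by simpa [Fin.sum_univ_three] using habc)
        (by intro i _; fin_cases i <;> assumption)
      simpa [Fin.sum_univ_three] using this
    show (Λ, Λ.det) ∈ C
    rw [hx]; exact key


lemma smul_diag (b c : ℝ) :
    b • (Matrix.diagonal ![(1:ℝ),1]) + c • (Matrix.diagonal ![(1:ℝ)/2,2])
      = Matrix.diagonal ![b + c/2, b + 2*c] := by
  ext i j
  fin_cases i <;> fin_cases j <;> simp [Matrix.diagonal] <;> ring

lemma rad_pos (c : ℝ) : 0 < 9 * c ^ 2 - 4 * c + 4 := by nlinarith [sq_nonneg (3*c - 2/3)]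

lemma combo_iff (Λ : Matrix (Fin 2) (Fin 2) ℝ) :
    ((Λ, Λ.det) : Matrix (Fin 2) (Fin 2) ℝ × ℝ) ∈ Combo ↔
      Λ ∈ ({(0 : Matrix (Fin 2) (Fin 2) ℝ), Matrix.diagonal ![(1 : ℝ), 1], Matrix.diagonal ![(1 : ℝ)/2, 2]} ∪
        {M : Matrix (Fin 2) (Fin 2) ℝ | ∃ t ∈ Set.Ioo (0 : ℝ) 1, M = Matrix.diagonal ![b₁ t, b₂ t]}) := by
  constructor
  · rintro ⟨a, b, c, ha, hb, hc, habc, hx⟩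
    rw [Prod.ext_iff] at hx
    have hM : Λ = Matrix.diagonal ![b + c/2, b + 2*c] := by
      rw [← smul_diag]
      simpa [p0, p1, p2] using hx.1
    have hdet : Λ.det = b + c := by
      simpa [p0, p1, p2] using hx.2
    have heq : (b + c/2) * (b + 2*c) = b + c := by
      rw [hM, det_diag] at hdet; linarith [hdet]
    rcases eq_or_lt_of_le hc with hc0 | hcpos
    · -- c = 0
      have hb2 : b * b = b := by nlinarith [heq, hc0]
      have : b = 0 ∨ b = 1 := by
        rcases mul_eq_zero.1 (show b * (b - 1) = 0 by nlinarith) with h | h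
        · exact Or.inl h
        · exact Or.inr (by linarith)
      rcases this with rfl | rfl
      · left; left
        rw [hM, ← hc0]
        ext i j; fin_cases i <;> fin_cases j <;> simp [Matrix.diagonal]
      · left; right; left
        rw [hM, ← hc0]; norm_num
    · -- c > 0
      have hc1 : c ≤ 1 := by linarith
      set s := Real.sqrt (9 * c ^ 2 - 4 * c + 4) with hs_def
      have hs2 : s ^ 2 = 9 * c ^ 2 - 4 * c + 4 := Real.sq_sqrt (rad_pos c).le
      have hs0 : 0 ≤ s := Real.sqrt_nonneg _
      have hroots : (b - (2 - 5*c + s)/4) * (b - (2 - 5*c - s)/4) = 0 := by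
        nlinarith [heq, hs2]
      rcases mul_eq_zero.1 hroots with h | h
      · -- b = r₊
        have hb_eq : b = (2 - 5*c + s)/4 := by linarith
        rcases eq_or_lt_of_le hc1 with hc1' | hc1'
        · -- c = 1 : Λ = B²
          subst hc1'
          have hs3 : s = 3 := by
            have h9 : s ^ 2 = 9 := by rw [hs2]; norm_num
            nlinarith
          left; right; right
          rw [hM, hb_eq, hs3]
          congr 1
          ext i; fin_cases i <;> norm_num
        · right
          refine ⟨c, ⟨hcpos, hc1'⟩, ?_⟩
          rw [hM, hb_eq]
          congr 1
          unfold b₁ b₂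
          rw [← hs_def]
          ext i; fin_cases i <;> simp <;> ring
      · -- b = r₋ : impossible
        exfalso
        have hb_eq : b = (2 - 5*c - s)/4 := by linarith
        have h4b : 0 ≤ 2 - 5*c - s := by linarith
        nlinarith [mul_nonneg h4b (by linarith : (0:ℝ) ≤ 2 - 5*c + s), hs2, hcpos, hc1, hs0]
  · rintro ((rfl | rfl | rfl) | ⟨t, ⟨ht0, ht1⟩, rfl⟩)
    · exact ⟨1, 0, 0, by norm_num, by norm_num, by norm_num, by norm_num, by
        simp [p0, p1, p2, Prod.ext_iff]⟩
    · exact ⟨0, 1, 0, by norm_num, by norm_num, by norm_num, by norm_num, by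
        simp [p0, p1, p2, Prod.ext_iff, det_diag]⟩
    · exact ⟨0, 0, 1, by norm_num, by norm_num, by norm_num, by norm_num, by
        simp [p0, p1, p2, Prod.ext_iff, det_diag]⟩
    · set s := Real.sqrt (9 * t ^ 2 - 4 * t + 4) with hs_def
      have hs2 : s ^ 2 = 9 * t ^ 2 - 4 * t + 4 := Real.sq_sqrt (rad_pos t).le
      have hs0 : 0 ≤ s := Real.sqrt_nonneg _
      have hbnn : 0 ≤ (2 - 5*t + s)/4 := by
        nlinarith [hs2, hs0, ht0.le, ht1.le, sq_nonneg (s - (5*t - 2)), sq_nonneg (s + (5*t-2))]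
      have hann : 0 ≤ 1 - (2 - 5*t + s)/4 - t := by
        nlinarith [hs2, hs0, ht0.le, ht1.le, sq_nonneg (s - (t + 2))]
      refine ⟨1 - (2 - 5*t + s)/4 - t, (2 - 5*t + s)/4, t, hann, hbnn, ht0.le, by ring, ?_⟩
      have hMeq : Matrix.diagonal ![b₁ t, b₂ t]
          = ((2 - 5*t + s)/4) • (Matrix.diagonal ![(1:ℝ),1]) + t • (Matrix.diagonal ![(1:ℝ)/2,2]) := by
        rw [smul_diag]
        unfold b₁ b₂
        rw [← hs_def]
        congr 1
        ext i; fin_cases i <;> simp <;> ring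
      have hDet : (Matrix.diagonal ![b₁ t, b₂ t]).det = (2 - 5*t + s)/4 + t := by
        rw [det_diag]
        unfold b₁ b₂
        rw [← hs_def]
        nlinarith [hs2]
      rw [Prod.ext_iff]
      constructor
      · simpa [p0, p1, p2] using hMeq
      · simpa [p0, p1, p2] using hDet

end PCH

/-- **Explicit polyconvex hull of the averaged triple.**
Let `O = diag(0,0)`, `B¹ = diag(1,1)`, `B² = diag(1/2, 2)` and `𝔅 = {O, B¹, B²}`. Then
`𝔅^pc = 𝔅 ∪ {diag(b₁(t), b₂(t)) : t ∈ (0,1)}`. -/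


theorem polyconvexHull_averaged_triple :
    polyconvexHull {(0 : Matrix (Fin 2) (Fin 2) ℝ),
        Matrix.diagonal ![(1 : ℝ), 1], Matrix.diagonal ![(1 : ℝ)/2, 2]} =
      {(0 : Matrix (Fin 2) (Fin 2) ℝ),
        Matrix.diagonal ![(1 : ℝ), 1], Matrix.diagonal ![(1 : ℝ)/2, 2]} ∪
      {M : Matrix (Fin 2) (Fin 2) ℝ | ∃ t ∈ Set.Ioo (0 : ℝ) 1,
        M = Matrix.diagonal ![b₁ t, b₂ t]} := by
  rw [PCH.hull_eq]
  ext Λ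
  exact PCH.combo_iff Λ
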